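/- Let n ≥ 1 and let V be a diagonal 2^n × 2^n unitary matrix with det V = 1. Then there exist real numbers t_A, indexed by the IZ-strings A of length n with A ≠ I_{2^n}, such that V = ∏_A exp(i t_A A); the factors are commuting diagonal matrices, so the product is independent of the order of the factors. -/

import Mathlib

open Matrix

/-- The Pauli matrix `σ3`. -/
noncomputable def σ3 : Matrix (Fin 2) (Fin 2) ℂ := !![1, 0; 0, -1]

/-- The 2×2 factor of an IZ-string: `σ3` if the bit is `true`, `I_2` otherwise. -/
noncomputable def izBit (b : Bool) : Matrix (Fin 2) (Fin 2) ℂ := if b then σ3 else 1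

/-- Kronecker product `A ⊗ B` with a `2 × 2` last factor, realized on `Fin (k * 2)`. -/
noncomputable def kronLast {k : ℕ} (A : Matrix (Fin k) (Fin k) ℂ)
    (B : Matrix (Fin 2) (Fin 2) ℂ) : Matrix (Fin (k * 2)) (Fin (k * 2)) ℂ :=
  Matrix.of fun i j =>
    A ⟨(i : ℕ) / 2, by omega⟩ ⟨(j : ℕ) / 2, by omega⟩ *
      B ⟨(i : ℕ) % 2, by omega⟩ ⟨(j : ℕ) % 2, by omega⟩

/-- `IZ n f` is the IZ-string `A_1 ⊗ ⋯ ⊗ A_n` of length `n`, where `A_i = σ3` if `f i = true`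
and `A_i = I_2` if `f i = false`. -/
noncomputable def IZ : (n : ℕ) → (Fin n → Bool) → Matrix (Fin (2 ^ n)) (Fin (2 ^ n)) ℂ
  | 0, _ => 1
  | (n + 1), f => kronLast (IZ n fun i => f i.castSucc) (izBit (f (Fin.last n)))

/-- the diagonal sign function of an IZ string -/
def sgn : (n : ℕ) → (Fin n → Bool) → Fin (2 ^ n) → ℝ
  | 0, _, _ => 1
  | (n+1), f, i =>
      sgn n (fun k => f k.castSucc) ⟨(i : ℕ) / 2, by have h := i.isLt; simp only [pow_succ] at h; omega⟩ *
      (if f (Fin.last n) ∧ (i : ℕ) % 2 = 1 then -1 else 1)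

lemma izBit_eq (b : Bool) :
    izBit b = Matrix.diagonal (fun r : Fin 2 => if b ∧ r = 1 then (-1 : ℂ) else 1) := by
  cases b <;> · ext i j; fin_cases i <;> fin_cases j <;>
    simp [izBit, σ3, Matrix.diagonal, Matrix.one_apply]

lemma kronLast_diagonal {k : ℕ} (a : Fin k → ℂ) (b : Fin 2 → ℂ) :
    kronLast (Matrix.diagonal a) (Matrix.diagonal b) =
      Matrix.diagonal (fun i : Fin (k * 2) =>
        a ⟨(i : ℕ) / 2, by omega⟩ * b ⟨(i : ℕ) % 2, by omega⟩) := by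
  ext i j
  simp only [kronLast, Matrix.of_apply, Matrix.diagonal_apply]
  by_cases h : i = j
  · subst h; simp
  · rw [if_neg h]
    have hv : (i : ℕ) ≠ (j : ℕ) := fun hc => h (Fin.ext hc)
    simp only [Fin.mk.injEq]
    rcases eq_or_ne ((i:ℕ)/2) ((j:ℕ)/2) with h1 | h1
    · have h2 : (i:ℕ) % 2 ≠ (j:ℕ) % 2 := by omega
      rw [if_neg h2, mul_zero]
    · rw [if_neg h1, zero_mul]

lemma IZ_eq (n : ℕ) (f : Fin n → Bool) :
    IZ n f = Matrix.diagonal (fun i => (sgn n f i : ℂ)) := by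
  induction n with
  | zero =>
    ext i j
    simp [IZ, sgn, Matrix.diagonal, Matrix.one_apply]
  | succ n ih =>
    show kronLast _ _ = _
    rw [ih, izBit_eq, kronLast_diagonal]
    refine congrArg Matrix.diagonal (funext fun i => ?_)
    simp only [sgn, Fin.ext_iff, Fin.val_one]
    by_cases hc : f (Fin.last n) = true ∧ (i : ℕ) % 2 = 1 <;> simp [hc]

lemma sgn_false (n : ℕ) (i : Fin (2^n)) : sgn n (fun _ => false) i = 1 := by
  induction n with
  | zero => rfl
  | succ n ih => simp only [sgn]; rw [ih]; simp

def snocEquiv (n : ℕ) : ((Fin n → Bool) × Bool) ≃ (Fin (n+1) → Bool) where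
  toFun p := Fin.snoc p.1 p.2
  invFun f := (fun k => f k.castSucc, f (Fin.last n))
  left_inv := by rintro ⟨g, b⟩; simp
  right_inv f := show Fin.snoc (fun k => f k.castSucc) (f (Fin.last n)) = f from Fin.snoc_init_self (q := f)

lemma sgn_ortho (n : ℕ) (i j : Fin (2^n)) :
    ∑ f : Fin n → Bool, sgn n f i * sgn n f j = if i = j then ((2:ℝ)^n) else 0 := by
  induction n with
  | zero => simp [sgn, show i = j from Fin.ext (by omega)]
  | succ n ih =>
    have hre := Fintype.sum_equiv (snocEquiv n) (fun p => sgn (n+1) (snocEquiv n p) i * sgn (n+1) (snocEquiv n p) j)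
      (fun f => sgn (n+1) f i * sgn (n+1) f j) (fun p => rfl)
    rw [← hre, Fintype.sum_prod_type]
    have hsnoc : ∀ (g : Fin n → Bool) (b : Bool),
        (fun k : Fin n => (Fin.snoc g b : Fin (n+1) → Bool) k.castSucc) = g :=
      fun g b => funext fun k => Fin.snoc_castSucc _ _ _
    simp only [snocEquiv, Equiv.coe_fn_mk, sgn, hsnoc, Fin.snoc_last]
    simp only [Fintype.sum_bool, Bool.false_eq_true, true_and, false_and, if_true, if_false, mul_one]
    rw [Finset.sum_add_distrib,
      Finset.sum_congr rfl (fun x _ => mul_mul_mul_comm (sgn n x _) _ (sgn n x _) _),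
      ← Finset.sum_mul, ih]
    have hiff : i = j ↔ ((i:ℕ)/2 = (j:ℕ)/2 ∧ (i:ℕ)%2 = (j:ℕ)%2) := by
      rw [Fin.ext_iff]; omega
    simp only [Fin.mk.injEq, hiff]
    rcases Nat.mod_two_eq_zero_or_one (i:ℕ) with h1 | h1 <;>
      rcases Nat.mod_two_eq_zero_or_one (j:ℕ) with h2 | h2 <;>
      by_cases h12 : (i:ℕ)/2 = (j:ℕ)/2 <;>
      simp [h1, h2, h12, pow_succ] <;> ring

lemma list_prod_diagonal {α : Type*} {m : ℕ} (l : List α) (d : α → Fin m → ℂ) :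
    (l.map fun x => Matrix.diagonal (d x)).prod
      = Matrix.diagonal (fun i => (l.map fun x => d x i).prod) := by
  induction l with
  | nil => simp
  | cons a l ih =>
    simp only [List.map_cons, List.prod_cons, ih, Matrix.diagonal_mul_diagonal]

lemma exp_factor (n : ℕ) (f : Fin n → Bool) (c : ℂ) :
    NormedSpace.exp (c • IZ n f)
      = Matrix.diagonal (fun i => Complex.exp (c * sgn n f i)) := by
  rw [IZ_eq, ← Matrix.diagonal_smul, Matrix.exp_diagonal, Pi.exp_def]
  refine congrArg Matrix.diagonal (funext fun i => ?_)
  rw [Pi.smul_apply, smul_eq_mul, Complex.exp_eq_exp_ℂ]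

/-- Let `n ≥ 1` and let `V` be a diagonal `2^n × 2^n` unitary matrix with
`det V = 1`.  Then there exist reals `t_A`, indexed by the non-identity IZ-strings `A` of
length `n`, such that `V = ∏_A exp(i t_A A)`. -/
theorem diagonal_su_decomp (n : ℕ) (hn : 1 ≤ n) (V : Matrix (Fin (2 ^ n)) (Fin (2 ^ n)) ℂ)
    (hdiag : ∀ i j, i ≠ j → V i j = 0)
    (hU : V ∈ Matrix.unitaryGroup (Fin (2 ^ n)) ℂ) (hdet : V.det = 1) :
    ∃ t : (Fin n → Bool) → ℝ,
      V = (((Finset.univ : Finset (Fin n → Bool)).filter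
              (fun f => f ≠ fun _ => false)).toList.map
            (fun f => NormedSpace.exp ((Complex.I * (t f : ℂ)) • IZ n f))).prod := by
  have hNpos : 0 < 2 ^ n := Nat.pow_pos (by norm_num)
  -- V is diagonal
  have hVdiag : V = Matrix.diagonal (fun i => V i i) := by
    ext i j
    by_cases h : i = j
    · subst h; simp
    · rw [Matrix.diagonal_apply_ne _ h]; exact hdiag i j h
  -- entries have modulus one
  have habs : ∀ i, ‖V i i‖ = 1 := by
    intro i
    have h1 : (V * star V) i i = (1 : Matrix (Fin (2 ^ n)) (Fin (2 ^ n)) ℂ) i i := by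
      rw [Matrix.mem_unitaryGroup_iff.mp hU]
    rw [Matrix.mul_apply, Matrix.one_apply_eq] at h1
    have h2 : ∑ k, V i k * star V k i = V i i * star (V i i) := by
      refine Finset.sum_eq_single i (fun k _ hk => ?_) (by simp)
      rw [hdiag i k (fun hc => hk hc.symm), zero_mul]
    rw [h2] at h1
    have : Complex.normSq (V i i) = 1 := by
      have := h1
      rw [Complex.star_def, Complex.mul_conj] at this
      exact_mod_cast this
    rw [← Complex.sq_norm] at this
    nlinarith [norm_nonneg (V i i)]
  set θ : Fin (2 ^ n) → ℝ := fun i => (V i i).arg with hθ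
  have hVθ : ∀ i, V i i = Complex.exp (θ i * Complex.I) := by
    intro i
    conv_lhs => rw [← Complex.norm_mul_exp_arg_mul_I (V i i)]
    rw [habs i]; simp; rfl
  -- determinant gives sum of args ≡ 0
  have hdet2 : Complex.exp (∑ i, (θ i : ℂ) * Complex.I) = 1 := by
    rw [Complex.exp_sum, ← hdet]
    conv_rhs => rw [hVdiag]
    rw [Matrix.det_diagonal]
    exact (Finset.prod_congr rfl fun i _ => (hVθ i).symm)
  obtain ⟨m, hm⟩ := Complex.exp_eq_one_iff.mp hdet2
  have hsum : ∑ i, θ i = m * (2 * Real.pi) := by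
    have h1 : ((∑ i, θ i : ℝ) : ℂ) * Complex.I = ((m * (2 * Real.pi) : ℝ) : ℂ) * Complex.I := by
      push_cast
      rw [Finset.sum_mul, hm]
      ring
    have h2 := mul_right_cancel₀ Complex.I_ne_zero h1
    exact_mod_cast h2
  set i₀ : Fin (2 ^ n) := ⟨0, hNpos⟩ with hi₀
  set θ' : Fin (2 ^ n) → ℝ := fun i => θ i - if i = i₀ then m * (2 * Real.pi) else 0 with hθ'
  have hVθ' : ∀ i, V i i = Complex.exp (Complex.I * θ' i) := by
    intro i
    rw [hθ']
    simp only []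
    by_cases h : i = i₀
    · rw [if_pos h]
      have h2 : (Complex.I * ((θ i - ↑m * (2 * Real.pi) : ℝ) : ℂ))
          = (θ i : ℝ) * Complex.I + (-m : ℤ) * (2 * Real.pi * Complex.I) := by
        push_cast; ring
      rw [h2, Complex.exp_add, Complex.exp_int_mul_two_pi_mul_I, mul_one, ← hVθ i]
    · rw [if_neg h, sub_zero, hVθ i]
      congr 1
      ring
  have hsum' : ∑ i, θ' i = 0 := by
    rw [hθ', Finset.sum_sub_distrib, hsum, Finset.sum_ite_eq' Finset.univ i₀ (fun _ => m * (2*Real.pi))]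
    simp
  -- the coefficients
  refine ⟨fun f => (∑ j, sgn n f j * θ' j) / 2 ^ n, ?_⟩
  set t : (Fin n → Bool) → ℝ := fun f => (∑ j, sgn n f j * θ' j) / 2 ^ n with ht
  have ht0 : t (fun _ => false) = 0 := by
    rw [ht]
    simp only [sgn_false, one_mul, hsum']
    simp
  -- key inversion identity
  have key : ∀ i, ∑ f : Fin n → Bool, t f * sgn n f i = θ' i := by
    intro i
    have h1 : ∀ f : Fin n → Bool, t f * sgn n f i
        = ∑ j, (sgn n f j * sgn n f i) * θ' j / 2 ^ n := by
      intro f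
      rw [ht]
      simp only []
      rw [div_mul_eq_mul_div, Finset.sum_mul, Finset.sum_div]
      exact Finset.sum_congr rfl fun j _ => by ring
    rw [Finset.sum_congr rfl fun f _ => h1 f, Finset.sum_comm]
    have h2 : ∀ j : Fin (2 ^ n), ∑ f : Fin n → Bool, (sgn n f j * sgn n f i) * θ' j / 2 ^ n
        = if j = i then θ' j else 0 := by
      intro j
      rw [← Finset.sum_div, ← Finset.sum_mul, sgn_ortho]
      split
      · field_simp
      · simp
    rw [Finset.sum_congr rfl fun j _ => h2 j, Finset.sum_ite_eq' Finset.univ i θ']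
    simp
  -- sum over non-identity strings equals sum over all strings
  have hsplit : ∀ i, ∑ f ∈ Finset.univ.filter (fun f => f ≠ fun _ => false), t f * sgn n f i
      = θ' i := by
    intro i
    rw [← key i,
      ← Finset.sum_filter_add_sum_filter_not Finset.univ (fun f => f ≠ fun _ => false)
        (fun f => t f * sgn n f i)]
    have hz : ∑ f ∈ Finset.univ.filter (fun f => ¬ f ≠ fun _ => false), t f * sgn n f i = 0 := by
      rw [Finset.sum_filter]
      refine Finset.sum_eq_zero fun f _ => ?_
      by_cases h : f = (fun _ => false)
      · rw [if_pos (by simpa using h), h, ht0, zero_mul]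
      · rw [if_neg (by simpa using h)]
    rw [hz, add_zero]
  -- now compute the matrix product
  have hmap : (fun f => NormedSpace.exp ((Complex.I * (t f : ℂ)) • IZ n f))
      = fun f => Matrix.diagonal (fun i => Complex.exp ((Complex.I * (t f : ℂ)) * (sgn n f i : ℂ))) :=
    funext fun f => exp_factor n f _
  rw [hmap, list_prod_diagonal]
  rw [hVdiag]
  refine congrArg Matrix.diagonal (funext fun i => ?_)
  rw [Finset.prod_map_toList, ← Complex.exp_sum]
  have hsumi : ∑ f ∈ Finset.univ.filter (fun f => f ≠ fun _ => false),
      (Complex.I * (t f : ℂ)) * (sgn n f i : ℂ) = Complex.I * ((θ' i : ℝ) : ℂ) := by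
    have hterm : ∀ f : Fin n → Bool, (Complex.I * (t f : ℂ)) * (sgn n f i : ℂ)
        = Complex.I * ((t f * sgn n f i : ℝ) : ℂ) := by
      intro f; push_cast; ring
    rw [Finset.sum_congr rfl fun f _ => hterm f, ← Finset.mul_sum]
    congr 1
    rw [← hsplit i]
    push_cast
    rfl
  rw [hsumi, ← hVθ' i]
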